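/- Let F = N(μ_F, σ_F²) and G = N(μ_G, σ_G²) be normal distributions with F ≠ G. Then the Cramér distance assigns a weakly smaller relative weight to dispersion than the AVM: (Disp_+^{CD}(F,G) + Disp_-^{CD}(F,G)) / CD(F,G) ≤ (Disp_+^{AVM}(F,G) + Disp_-^{AVM}(F,G)) / AVM(F,G). -/

import Mathlib

open MeasureTheory

/-- Standard normal density. -/
noncomputable def stdPdf (x : ℝ) : ℝ :=
  (Real.sqrt (2 * Real.pi))⁻¹ * Real.exp (-(x ^ 2) / 2)

/-- Standard normal distribution function. -/
noncomputable def stdCdf (x : ℝ) : ℝ := ∫ t in Set.Iic x, stdPdf t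

lemma stdPdf_pos (x : ℝ) : 0 < stdPdf x := by
  have h : 0 < Real.sqrt (2 * Real.pi) := Real.sqrt_pos.2 (by positivity)
  exact mul_pos (inv_pos.2 h) (Real.exp_pos _)

lemma stdPdf_cont : Continuous stdPdf := by
  unfold stdPdf; fun_prop

lemma stdPdf_integrable : Integrable stdPdf := by
  have h : Integrable (fun x : ℝ => Real.exp (-(1/2) * x ^ 2)) :=
    integrable_exp_neg_mul_sq (by norm_num)
  have := h.const_mul (Real.sqrt (2 * Real.pi))⁻¹
  convert this using 2 with x
  unfold stdPdf; ring_nf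

lemma integral_stdPdf : ∫ x, stdPdf x = 1 := by
  have h : ∫ x : ℝ, Real.exp (-(1/2) * x ^ 2) = Real.sqrt (Real.pi / (1/2)) :=
    integral_gaussian (1/2)
  have h2 : ∫ x, stdPdf x = (Real.sqrt (2 * Real.pi))⁻¹ * ∫ x : ℝ, Real.exp (-(1/2) * x ^ 2) := by
    rw [← integral_const_mul]; congr 1 with x; unfold stdPdf; ring_nf
  rw [h2, h, show Real.pi / (1/2) = 2 * Real.pi by ring]
  exact inv_mul_cancel₀ (ne_of_gt (Real.sqrt_pos.2 (by positivity)))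

lemma stdCdf_zero : stdCdf 0 = 1/2 := by
  have h1 : stdCdf 0 = ∫ x in Set.Ioi (0:ℝ), stdPdf x := by
    unfold stdCdf
    have : ∀ x : ℝ, stdPdf x = stdPdf (-x) := by
      intro x; unfold stdPdf; norm_num
    calc ∫ t in Set.Iic (0:ℝ), stdPdf t = ∫ t in Set.Iic (0:ℝ), stdPdf (-t) := by
          simp_rw [← this]
      _ = ∫ x in Set.Ioi (-(0:ℝ)), stdPdf x := integral_comp_neg_Iic 0 stdPdf
      _ = ∫ x in Set.Ioi (0:ℝ), stdPdf x := by norm_num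
  have h2 : stdCdf 0 + ∫ x in Set.Ioi (0:ℝ), stdPdf x = 1 := by
    rw [← integral_stdPdf]
    exact intervalIntegral.integral_Iic_add_Ioi stdPdf_integrable.integrableOn
      stdPdf_integrable.integrableOn
  rw [← h1] at h2; linarith

lemma stdCdf_sub (y x : ℝ) : stdCdf x - stdCdf y = ∫ t in y..x, stdPdf t :=
  intervalIntegral.integral_Iic_sub_Iic stdPdf_integrable.integrableOn
    stdPdf_integrable.integrableOn

lemma stdCdf_hasDeriv (x : ℝ) : HasDerivAt stdCdf (stdPdf x) x := by
  have key : ∀ y : ℝ, stdCdf y = stdCdf 0 + ∫ t in (0:ℝ)..y, stdPdf t := by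
    intro y; rw [← stdCdf_sub 0 y]; ring
  have h : HasDerivAt (fun y => stdCdf 0 + ∫ t in (0:ℝ)..y, stdPdf t) (stdPdf x) x := by
    refine HasDerivAt.const_add _ ?_
    exact intervalIntegral.integral_hasDerivAt_right
      (stdPdf_integrable.intervalIntegrable)
      stdPdf_cont.aestronglyMeasurable.stronglyMeasurableAtFilter
      stdPdf_cont.continuousAt
  exact h.congr_of_eventuallyEq (Filter.Eventually.of_forall key)

lemma stdCdf_cont : Continuous stdCdf := by
  have : Differentiable ℝ stdCdf := fun x => (stdCdf_hasDeriv x).differentiableAt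
  exact this.continuous

lemma stdPdf_anti {u v : ℝ} (hu : 0 ≤ u) (huv : u ≤ v) : stdPdf v ≤ stdPdf u := by
  unfold stdPdf
  have : Real.exp (-(v^2)/2) ≤ Real.exp (-(u^2)/2) := Real.exp_le_exp.2 (by nlinarith)
  have h0 : 0 ≤ (Real.sqrt (2 * Real.pi))⁻¹ := by positivity
  exact mul_le_mul_of_nonneg_left this h0

lemma stdCdf_half_le {z : ℝ} (hz : 0 ≤ z) : 1/2 ≤ stdCdf z := by
  have h := stdCdf_sub 0 z
  rw [stdCdf_zero] at h
  have : 0 ≤ ∫ t in (0:ℝ)..z, stdPdf t :=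
    intervalIntegral.integral_nonneg hz (fun u _ => (stdPdf_pos u).le)
  linarith

lemma stdCdf_concave_key {t z : ℝ} (ht0 : 0 < t) (ht1 : t ≤ 1) (hz : 0 ≤ z) :
    t * (stdCdf z - 1/2) ≤ stdCdf (t * z) - 1/2 := by
  rw [← stdCdf_zero, stdCdf_sub, stdCdf_sub]
  have hcv : ∫ x in (0:ℝ)..z, stdPdf (t * x) = t⁻¹ * ∫ x in (0:ℝ)..(t*z), stdPdf x := by
    have := intervalIntegral.integral_comp_mul_left (a := (0:ℝ)) (b := z) stdPdf (ne_of_gt ht0)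
    simpa [mul_zero] using this
  have hmono : ∫ x in (0:ℝ)..z, stdPdf x ≤ ∫ x in (0:ℝ)..z, stdPdf (t * x) := by
    apply intervalIntegral.integral_mono_on hz
    · exact stdPdf_cont.intervalIntegrable _ _
    · exact (stdPdf_cont.comp (continuous_const.mul continuous_id)).intervalIntegrable _ _
    · intro x hx
      exact stdPdf_anti (by nlinarith [hx.1]) (by nlinarith [hx.1])
  rw [hcv] at hmono
  calc t * ∫ x in (0:ℝ)..z, stdPdf x ≤ t * (t⁻¹ * ∫ x in (0:ℝ)..(t*z), stdPdf x) := by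
        exact mul_le_mul_of_nonneg_left hmono ht0.le
    _ = ∫ x in (0:ℝ)..(t*z), stdPdf x := by field_simp

lemma stdPdf_hasDeriv (x : ℝ) : HasDerivAt stdPdf (-x * stdPdf x) x := by
  have h1 : HasDerivAt (fun x : ℝ => -(x ^ 2) / 2) (-x) x := by
    have := ((hasDerivAt_pow 2 x).neg).div_const 2
    simpa using this.congr_deriv (by ring)
  have h2 := (h1.exp).const_mul (Real.sqrt (2 * Real.pi))⁻¹
  have heq : stdPdf = fun x => (Real.sqrt (2 * Real.pi))⁻¹ * Real.exp (-(x ^ 2) / 2) := rfl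
  rw [heq]
  refine h2.congr_deriv ?_
  beta_reduce
  ring

lemma H_hasDeriv (s : ℝ) (hs : s ≠ 0) (x : ℝ) :
    HasDerivAt (fun x => x * (2 * stdCdf (x / s) - 1) + 2 * s * stdPdf (x / s))
      (2 * stdCdf (x / s) - 1) x := by
  have hu : HasDerivAt (fun x : ℝ => x / s) (1 / s) x := (hasDerivAt_id x).div_const s |>.congr_deriv (by ring)
  have hΦ : HasDerivAt (fun x => stdCdf (x / s)) (stdPdf (x / s) * (1 / s)) x :=
    by have := (stdCdf_hasDeriv (x / s)).comp x hu; exact this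
  have hφ : HasDerivAt (fun x => stdPdf (x / s)) ((-(x / s) * stdPdf (x / s)) * (1 / s)) x :=
    by have := (stdPdf_hasDeriv (x / s)).comp x hu; exact this
  have h1 : HasDerivAt (fun x => x * (2 * stdCdf (x / s) - 1))
      (1 * (2 * stdCdf (x / s) - 1) + x * (2 * (stdPdf (x / s) * (1 / s)))) x := by
    exact (hasDerivAt_id x).mul (((hΦ.const_mul 2)).sub_const 1)
  have h2 : HasDerivAt (fun x => 2 * s * stdPdf (x / s))
      (2 * s * ((-(x / s) * stdPdf (x / s)) * (1 / s))) x := hφ.const_mul (2 * s)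
  have := h1.add h2
  refine this.congr_deriv ?_
  field_simp
  ring

lemma H_sub (s : ℝ) (hs : s ≠ 0) (a : ℝ) :
    (a * (2 * stdCdf (a / s) - 1) + 2 * s * stdPdf (a / s)) - 2 * s * stdPdf 0 =
      ∫ x in (0:ℝ)..a, (2 * stdCdf (x / s) - 1) := by
  have hc : Continuous fun x : ℝ => 2 * stdCdf (x / s) - 1 := by
    exact (continuous_const.mul (stdCdf_cont.comp (continuous_id.div_const s))).sub continuous_const
  have key := intervalIntegral.integral_eq_sub_of_hasDerivAt
    (f := fun x => x * (2 * stdCdf (x / s) - 1) + 2 * s * stdPdf (x / s))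
    (f' := fun x => 2 * stdCdf (x / s) - 1)
    (a := 0) (b := a)
    (fun x _ => H_hasDeriv s hs x)
    (hc.intervalIntegrable 0 a)
  rw [key]
  simp [zero_div]

set_option maxHeartbeats 1600000 in
/-- For normal distributions `F = N(μ_F, σ_F²) ≠ G = N(μ_G, σ_G²)`, the Cramér
distance assigns a weakly smaller relative weight to dispersion than the AVM,
expressed via the closed forms of the distances and their dispersion terms. -/
theorem cd_disp_weight_le_avm (μF μG σF σG : ℝ)
    (hσF : 0 < σF) (hσG : 0 < σG) (hne : (μF, σF) ≠ (μG, σG)) :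
    (σF = σG →
      (2 * Real.sqrt (σF ^ 2 + σG ^ 2) * stdPdf 0 -
          Real.sqrt 2 * stdPdf 0 * (σF + σG)) /
        (2 * Real.sqrt (σF ^ 2 + σG ^ 2) *
            stdPdf (|μF - μG| / Real.sqrt (σF ^ 2 + σG ^ 2)) +
          |μF - μG| *
            (2 * stdCdf (|μF - μG| / Real.sqrt (σF ^ 2 + σG ^ 2)) - 1) -
          Real.sqrt 2 * stdPdf 0 * (σF + σG)) ≤
      (2 * |σF - σG| * stdPdf 0) / |μF - μG|) ∧
    (σF ≠ σG →
      (2 * Real.sqrt (σF ^ 2 + σG ^ 2) * stdPdf 0 -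
          Real.sqrt 2 * stdPdf 0 * (σF + σG)) /
        (2 * Real.sqrt (σF ^ 2 + σG ^ 2) *
            stdPdf (|μF - μG| / Real.sqrt (σF ^ 2 + σG ^ 2)) +
          |μF - μG| *
            (2 * stdCdf (|μF - μG| / Real.sqrt (σF ^ 2 + σG ^ 2)) - 1) -
          Real.sqrt 2 * stdPdf 0 * (σF + σG)) ≤
      (2 * |σF - σG| * stdPdf 0) /
        (|μF - μG| * (2 * stdCdf (|μF - μG| / |σF - σG|) - 1) +
          2 * |σF - σG| * stdPdf (|μF - μG| / |σF - σG|))) := by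
  constructor
  · intro hσ
    subst hσ
    have hρ : Real.sqrt (σF ^ 2 + σF ^ 2) = Real.sqrt 2 * σF := by
      rw [show σF ^ 2 + σF ^ 2 = 2 * σF ^ 2 by ring, Real.sqrt_mul (by norm_num) (σF ^ 2),
        Real.sqrt_sq hσF.le]
    have hnum : 2 * Real.sqrt (σF ^ 2 + σF ^ 2) * stdPdf 0 -
        Real.sqrt 2 * stdPdf 0 * (σF + σF) = 0 := by rw [hρ]; ring
    rw [hnum]
    simp
  · intro hσ
    set a : ℝ := |μF - μG| with ha_def
    set σt : ℝ := |σF - σG| with hσt_def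
    set ρ : ℝ := Real.sqrt (σF ^ 2 + σG ^ 2) with hρ_def
    set φ0 : ℝ := stdPdf 0 with hφ0_def
    have ha0 : 0 ≤ a := abs_nonneg _
    have hσt0 : 0 < σt := abs_pos.2 (sub_ne_zero.2 hσ)
    have hρ0 : 0 < ρ := Real.sqrt_pos.2 (by positivity)
    have hφ0pos : 0 < φ0 := stdPdf_pos 0
    have hρ2 : ρ ^ 2 = σF ^ 2 + σG ^ 2 := Real.sq_sqrt (by positivity)
    have hσt2 : σt ^ 2 = (σF - σG) ^ 2 := sq_abs _
    have hσtρ : σt ≤ ρ := by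
      rw [hσt_def, ← Real.sqrt_sq_eq_abs]
      exact Real.sqrt_le_sqrt (by nlinarith)
    have hs2 : Real.sqrt 2 ^ 2 = 2 := Real.sq_sqrt (by norm_num)
    have hs2pos : 0 < Real.sqrt 2 := Real.sqrt_pos.2 (by norm_num)
    -- √2 ρ ≥ σF + σG
    have hsum_le : σF + σG ≤ Real.sqrt 2 * ρ := by
      nlinarith [sq_nonneg (Real.sqrt 2 * ρ - (σF + σG)), sq_nonneg (σF - σG),
        mul_pos hs2pos hρ0]
    -- K > 0
    have hKpos : 0 < 2 * ρ * φ0 - Real.sqrt 2 * φ0 * (σF + σG) := by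
      have h2ρ : Real.sqrt 2 * (σF + σG) < 2 * ρ := by
        nlinarith [sq_nonneg (σF - σG), mul_pos (mul_pos hs2pos hρ0)
          (add_pos hσF hσG), sq_abs (σF - σG), hσt0]
      nlinarith
    set K : ℝ := 2 * ρ * φ0 - Real.sqrt 2 * φ0 * (σF + σG) with hK_def
    -- K * ρ ≤ 2 σt² φ0
    have hKρ : K * ρ ≤ 2 * σt ^ 2 * φ0 := by
      have h4 : 4 * (σF * σG) ≤ Real.sqrt 2 * ρ * (σF + σG) := by
        nlinarith [sq_nonneg (σF - σG), mul_pos hσF hσG]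
      rw [hK_def]
      nlinarith
    -- pointwise inequality on [0, a]
    have hpoint : ∀ x ∈ Set.Icc (0:ℝ) a,
        K * (2 * stdCdf (x / σt) - 1) ≤ 2 * σt * φ0 * (2 * stdCdf (x / ρ) - 1) := by
      intro x hx
      have hx0 : 0 ≤ x := hx.1
      have hzσ : 0 ≤ x / σt := div_nonneg hx0 hσt0.le
      have hΦσ : 0 ≤ 2 * stdCdf (x / σt) - 1 := by
        have := stdCdf_half_le hzσ; linarith
      have ht0 : 0 < σt / ρ := div_pos hσt0 hρ0
      have ht1 : σt / ρ ≤ 1 := (div_le_one hρ0).2 hσtρ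
      have htz : (σt / ρ) * (x / σt) = x / ρ := by
        field_simp
      have hconc := stdCdf_concave_key ht0 ht1 hzσ
      rw [htz] at hconc
      have h3 : (σt / ρ) * (2 * stdCdf (x / σt) - 1) ≤ 2 * stdCdf (x / ρ) - 1 := by
        nlinarith [hconc]
      have hKle : K ≤ 2 * σt ^ 2 * φ0 / ρ := (le_div_iff₀ hρ0).2 hKρ
      calc K * (2 * stdCdf (x / σt) - 1)
          ≤ (2 * σt ^ 2 * φ0 / ρ) * (2 * stdCdf (x / σt) - 1) :=
            mul_le_mul_of_nonneg_right hKle hΦσ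
        _ = (2 * σt * φ0) * ((σt / ρ) * (2 * stdCdf (x / σt) - 1)) := by ring
        _ ≤ (2 * σt * φ0) * (2 * stdCdf (x / ρ) - 1) :=
            mul_le_mul_of_nonneg_left h3 (by positivity)
    -- continuity
    have hcρ : Continuous fun x : ℝ => 2 * stdCdf (x / ρ) - 1 := by
      exact (continuous_const.mul (stdCdf_cont.comp (continuous_id.div_const ρ))).sub
        continuous_const
    have hcσ : Continuous fun x : ℝ => 2 * stdCdf (x / σt) - 1 := by
      exact (continuous_const.mul (stdCdf_cont.comp (continuous_id.div_const σt))).sub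
        continuous_const
    -- integral inequality
    have hIρ := H_sub ρ hρ0.ne' a
    have hIσ := H_sub σt hσt0.ne' a
    have hnonneg : 0 ≤ ∫ x in (0:ℝ)..a,
        (2 * σt * φ0 * (2 * stdCdf (x / ρ) - 1) - K * (2 * stdCdf (x / σt) - 1)) := by
      apply intervalIntegral.integral_nonneg ha0
      intro x hx
      have := hpoint x hx
      linarith
    have hsplit : ∫ x in (0:ℝ)..a,
        (2 * σt * φ0 * (2 * stdCdf (x / ρ) - 1) - K * (2 * stdCdf (x / σt) - 1)) =
        2 * σt * φ0 * (∫ x in (0:ℝ)..a, (2 * stdCdf (x / ρ) - 1)) -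
          K * (∫ x in (0:ℝ)..a, (2 * stdCdf (x / σt) - 1)) := by
      rw [intervalIntegral.integral_sub (by have h : Continuous fun x : ℝ => 2 * σt * φ0 * (2 * stdCdf (x / ρ) - 1) := continuous_const.mul hcρ; exact h.intervalIntegrable 0 a)
        (by have h : Continuous fun x : ℝ => K * (2 * stdCdf (x / σt) - 1) := continuous_const.mul hcσ; exact h.intervalIntegrable 0 a),
        intervalIntegral.integral_const_mul, intervalIntegral.integral_const_mul]
    rw [hsplit, ← hIρ, ← hIσ] at hnonneg
    -- nonnegativity of each integral, for positivity of denominators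
    have hIρnn : 0 ≤ (a * (2 * stdCdf (a / ρ) - 1) + 2 * ρ * stdPdf (a / ρ)) - 2 * ρ * φ0 := by
      rw [hIρ]
      apply intervalIntegral.integral_nonneg ha0
      intro x hx
      have := stdCdf_half_le (div_nonneg hx.1 hρ0.le)
      linarith
    have hIσnn : 0 ≤ (a * (2 * stdCdf (a / σt) - 1) + 2 * σt * stdPdf (a / σt)) - 2 * σt * φ0 := by
      rw [hIσ]
      apply intervalIntegral.integral_nonneg ha0
      intro x hx
      have := stdCdf_half_le (div_nonneg hx.1 hσt0.le)
      linarith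
    have hAVMpos : 0 < a * (2 * stdCdf (a / σt) - 1) + 2 * σt * stdPdf (a / σt) := by
      linarith [hIσnn, mul_pos hσt0 hφ0pos]
    have hCDpos : 0 < 2 * ρ * stdPdf (a / ρ) + a * (2 * stdCdf (a / ρ) - 1) -
        Real.sqrt 2 * φ0 * (σF + σG) := by
      rw [hK_def] at hKpos
      linarith [hIρnn, hKpos]
    have hid : 2 * σt * φ0 * (2 * ρ * stdPdf (a / ρ) + a * (2 * stdCdf (a / ρ) - 1) -
          Real.sqrt 2 * φ0 * (σF + σG)) -
        K * (a * (2 * stdCdf (a / σt) - 1) + 2 * σt * stdPdf (a / σt)) =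
        2 * σt * φ0 * ((a * (2 * stdCdf (a / ρ) - 1) + 2 * ρ * stdPdf (a / ρ)) - 2 * ρ * φ0) -
          K * ((a * (2 * stdCdf (a / σt) - 1) + 2 * σt * stdPdf (a / σt)) - 2 * σt * φ0) := by
      rw [hK_def]; ring
    have hfinal : K * (a * (2 * stdCdf (a / σt) - 1) + 2 * σt * stdPdf (a / σt)) ≤
        2 * σt * φ0 * (2 * ρ * stdPdf (a / ρ) + a * (2 * stdCdf (a / ρ) - 1) -
          Real.sqrt 2 * φ0 * (σF + σG)) := by
      linarith [hnonneg, hid]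
    rw [div_le_div_iff₀ hCDpos hAVMpos]
    exact hfinal
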